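/- Let the machine M be FTA-compliant with the election architectural specification (EE, C_EE), i.e., FTA-compliant with (EE, ℐ) for some interpretation ℐ ∈ C_EE. Then for every voter v, every voter permutation P with P(v) = v, and every sequence α ∈ A*, we have view_v(α) = view_v(P(α)), i.e., α ≈_v P(α). -/

import Mathlib

structure Machine (S A D O : Type) where
  s0 : S
  step : S → A → S
  dom : A → D
  obs : D → S → O

namespace Machine

def run {S A D O : Type} (M : Machine S A D O) (α : List A) : S :=
  α.foldl M.step M.s0

end Machine
/-- Elements of a view: actions or (group) observations. -/
inductive VE (A O' : Type) where
  | act : A → VE A O'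
  | obs : O' → VE A O'

open Classical in
/-- Absorptive concatenation: `σ ∘ x` is `σ` if `x` equals the last element of `σ`,
and `σ ++ [x]` otherwise. -/
noncomputable def absorb {X : Type} (σ : List X) (x : X) : List X :=
  if σ.getLast? = some x then σ else σ ++ [x]

open Classical in
/-- View of a group `G`, computed on the reversed action sequence. -/
noncomputable def viewR {S A D O : Type} (M : Machine S A D O) (G : Set D) :
    List A → List (VE A (G → O))
  | [] => [VE.obs (fun u : G => M.obs u.1 M.s0)]
  | a :: ρ =>
    let o : VE A (G → O) := VE.obs (fun u : G => M.obs u.1 (M.run ((a :: ρ).reverse)))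
    if M.dom a ∈ G then viewR M G ρ ++ [VE.act a, o] else absorb (viewR M G ρ) o

/-- The view of group `G` of the action sequence `α`. -/
noncomputable def view {S A D O : Type} (M : Machine S A D O) (G : Set D) (α : List A) :
    List (VE A (G → O)) :=
  viewR M G α.reverse
/-- An extended architecture: `edge u v = none` means no edge, `edge u v = some none`
means an edge labelled `⊤`, and `edge u v = some (some f)` means an edge labelled by
the filter-function name `f`.  There is at most one label per ordered pair by
construction, and the relation is reflexive with label `⊤`. -/
structure ExtArch (D L : Type) where
  edge : D → D → Option (Option L)
  refl : ∀ u, edge u u = some none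

/-- Values of the `tf` function and of filter-function interpretations:
`eps` is the empty value ε, `base v` an arbitrary basic value, and
`pair σ a` the pair `(σ, a)` of a `tf` value and an action. -/
inductive TFVal (A V : Type) where
  | eps : TFVal A V
  | base : V → TFVal A V
  | pair : List (TFVal A V) → A → TFVal A V

/-- `σ ⌢ x`: appends `x` as a single new last element unless `x = ε`. -/
def snoc' {A V : Type} (σ : List (TFVal A V)) : TFVal A V → List (TFVal A V)
  | .eps => σ
  | x => σ ++ [x]

/-- `tf`, computed on the reversed action sequence. -/
def tfR {A D L V : Type} (Arch : ExtArch D L) (dm : A → D)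
    (I : L → List A → A → TFVal A V) : List A → D → List (TFVal A V)
  | [], _ => []
  | a :: ρ, u =>
    match Arch.edge (dm a) u with
    | none => tfR Arch dm I ρ u
    | some none => tfR Arch dm I ρ u ++ [TFVal.pair (tfR Arch dm I ρ (dm a)) a]
    | some (some f) => snoc' (tfR Arch dm I ρ u) (I f ρ.reverse a)

/-- `tf Arch dm I α u` : maximal information domain `u` is permitted to have after `α`. -/
def tf {A D L V : Type} (Arch : ExtArch D L) (dm : A → D)
    (I : L → List A → A → TFVal A V) (α : List A) (u : D) : List (TFVal A V) :=
  tfR Arch dm I α.reverse u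

/-- `inF Arch dm I α a u` : the information `in_{dom(a),u}(α, a)` transmitted to `u`
when action `a` is performed after `α`. -/
def inF {A D L V : Type} (Arch : ExtArch D L) (dm : A → D)
    (I : L → List A → A → TFVal A V) (α : List A) (a : A) (u : D) : TFVal A V :=
  match Arch.edge (dm a) u with
  | none => TFVal.eps
  | some none => TFVal.pair (tf Arch dm I α (dm a)) a
  | some (some f) => I f α a
/-- FTA-compliance of a machine with an interpreted extended architecture
(whose actions, domains and domain function are those of the machine). -/
def FTACompliant {S A D O L V : Type} (M : Machine S A D O) (Arch : ExtArch D L)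
    (I : L → List A → A → TFVal A V) : Prop :=
  ∀ (u : D) (α α' : List A), tf Arch M.dom I α u = tf Arch M.dom I α' u →
    M.obs u (M.run α) = M.obs u (M.run α')
/-- Domains of the election architecture: the voters and the election
authority. -/
inductive EEDom (Vt : Type) where
  | voter : Vt → EEDom Vt
  | auth : EEDom Vt

open Classical in
/-- The election extended architecture: reflexive `⊤`-edges, `v ↝_⊤ ElecAuth`
for each voter `v`, and `ElecAuth ↝_results v` for each voter `v` (the label
set is `Unit`, with `()` standing for `results`). -/
noncomputable def EEArch (Vt : Type) : ExtArch (EEDom Vt) Unit where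
  edge u v :=
    match u, v with
    | .voter a, .voter b => if a = b then some none else none
    | .voter _, .auth => some none
    | .auth, .voter _ => some (some ())
    | .auth, .auth => some none
  refl u := by cases u <;> simp

open Classical in
/-- The action of a voter permutation `P` on a single action: an action of the
form `act t v` (type `t` performed by voter `v`) is mapped to `act t (P v)`;
all other actions are fixed. -/
noncomputable def permA {Vt AV A : Type} (act : AV → Vt → A) (P : Equiv.Perm Vt)
    (a : A) : A :=
  if h : ∃ v : Vt, ∃ t : AV, act t v = a then
    act h.choose_spec.choose (P h.choose)
  else a

/-- The action of a voter permutation on a sequence of actions. -/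
noncomputable def permSeq {Vt AV A : Type} (act : AV → Vt → A) (P : Equiv.Perm Vt)
    (α : List A) : List A :=
  α.map (permA act P)

section Aux

variable {S A O V Vt AV : Type}

lemma permA_act {act : AV → Vt → A} {P : Equiv.Perm Vt}
    (hinj : ∀ (t t' : AV) (v v' : Vt), act t v = act t' v' → t = t' ∧ v = v')
    (t : AV) (w : Vt) : permA act P (act t w) = act t (P w) := by
  unfold permA
  have h : ∃ v : Vt, ∃ t' : AV, act t' v = act t w := ⟨w, t, rfl⟩
  rw [dif_pos h]
  obtain ⟨ht, hv⟩ := hinj _ _ _ _ h.choose_spec.choose_spec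
  rw [ht, hv]

lemma permA_auth {M : Machine S A (EEDom Vt) O} {act : AV → Vt → A} {P : Equiv.Perm Vt}
    (hdom : ∀ (t : AV) (v : Vt), M.dom (act t v) = EEDom.voter v)
    {a : A} (h : M.dom a = EEDom.auth) : permA act P a = a := by
  have hex : ¬ ∃ v : Vt, ∃ t : AV, act t v = a := by
    rintro ⟨w, t, rfl⟩
    rw [hdom] at h
    cases h
  unfold permA
  rw [dif_neg hex]

lemma edge_vv_eq (Vt : Type) (v : Vt) :
    (EEArch Vt).edge (EEDom.voter v) (EEDom.voter v) = some none :=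
  (EEArch Vt).refl _

lemma edge_vv_ne (Vt : Type) {w v : Vt} (h : w ≠ v) :
    (EEArch Vt).edge (EEDom.voter w) (EEDom.voter v) = none := by
  simp [EEArch, h]

lemma edge_av (Vt : Type) (v : Vt) :
    (EEArch Vt).edge EEDom.auth (EEDom.voter v) = some (some ()) := rfl

lemma tfR_perm {M : Machine S A (EEDom Vt) O} {act : AV → Vt → A} {P : Equiv.Perm Vt}
    (hdom : ∀ (t : AV) (v : Vt), M.dom (act t v) = EEDom.voter v)
    (hsurj : ∀ (a : A) (v : Vt), M.dom a = EEDom.voter v → ∃ t : AV, act t v = a)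
    (hinj : ∀ (t t' : AV) (v v' : Vt), act t v = act t' v' → t = t' ∧ v = v')
    (I : Unit → List A → A → TFVal A V)
    (hA1 : ∀ (P : Equiv.Perm Vt) (α : List A) (a : A), M.dom a = EEDom.auth →
      I () α a = I () (permSeq act P α) a)
    (v : Vt) (hPv : P v = v) :
    ∀ ρ : List A, tfR (EEArch Vt) M.dom I (ρ.map (permA act P)) (EEDom.voter v)
      = tfR (EEArch Vt) M.dom I ρ (EEDom.voter v) := by
  intro ρ
  induction ρ with
  | nil => rfl
  | cons a ρ ih =>
    rw [List.map_cons]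
    cases hda : M.dom a with
    | voter w =>
      obtain ⟨t, rfl⟩ := hsurj a w hda
      have hpa : permA act P (act t w) = act t (P w) := permA_act hinj t w
      by_cases hwv : w = v
      · subst hwv
        rw [hpa, hPv]
        simp only [tfR, hdom, edge_vv_eq, ih]
      · have hPwv : P w ≠ v := fun h => hwv (P.injective (h.trans hPv.symm))
        rw [hpa]
        simp only [tfR, hdom, edge_vv_ne Vt hwv, edge_vv_ne Vt hPwv, ih]
    | auth =>
      have hpa : permA act P a = a := permA_auth hdom hda
      rw [hpa]
      simp only [tfR, hda, edge_av, ih, snoc']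
      have : I () (List.reverse ρ) a = I () (permSeq act P (List.reverse ρ)) a :=
        hA1 P ρ.reverse a hda
      rw [show permSeq act P (List.reverse ρ) = (ρ.map (permA act P)).reverse from
        List.map_reverse] at this
      rw [← this]

lemma viewR_perm {M : Machine S A (EEDom Vt) O} {act : AV → Vt → A} {P : Equiv.Perm Vt}
    (hdom : ∀ (t : AV) (v : Vt), M.dom (act t v) = EEDom.voter v)
    (hsurj : ∀ (a : A) (v : Vt), M.dom a = EEDom.voter v → ∃ t : AV, act t v = a)
    (hinj : ∀ (t t' : AV) (v v' : Vt), act t v = act t' v' → t = t' ∧ v = v')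
    (I : Unit → List A → A → TFVal A V)
    (hA1 : ∀ (P : Equiv.Perm Vt) (α : List A) (a : A), M.dom a = EEDom.auth →
      I () α a = I () (permSeq act P α) a)
    (hFTA : FTACompliant M (EEArch Vt) I)
    (v : Vt) (hPv : P v = v) :
    ∀ ρ : List A, viewR M {EEDom.voter v} (ρ.map (permA act P))
      = viewR M {EEDom.voter v} ρ := by
  intro ρ
  induction ρ with
  | nil => rfl
  | cons a ρ ih =>
    rw [List.map_cons]
    have hobs : (fun u : ({EEDom.voter v} : Set (EEDom Vt)) =>
          M.obs u.1 (M.run ((permA act P a :: ρ.map (permA act P)).reverse)))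
        = fun u : ({EEDom.voter v} : Set (EEDom Vt)) =>
          M.obs u.1 (M.run ((a :: ρ).reverse)) := by
      funext u
      have hu : u.1 = EEDom.voter v := u.2
      rw [hu]
      apply hFTA
      show tfR _ _ _ _ _ = tfR _ _ _ _ _
      rw [List.reverse_reverse, List.reverse_reverse]
      exact tfR_perm hdom hsurj hinj I hA1 v hPv (a :: ρ)
    cases hda : M.dom a with
    | voter w =>
      obtain ⟨t, rfl⟩ := hsurj a w hda
      have hpa : permA act P (act t w) = act t (P w) := permA_act hinj t w
      by_cases hwv : w = v
      · subst hwv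
        rw [hpa, hPv] at hobs ⊢
        simp only [viewR, hdom, Set.mem_singleton_iff, if_pos rfl, ih, hobs]
      · have hPwv : EEDom.voter (P w) ≠ EEDom.voter v := by
          intro h
          exact hwv (P.injective ((EEDom.voter.injEq _ _ ▸ h).trans hPv.symm))
        have hwv' : EEDom.voter w ≠ EEDom.voter v := by
          simpa using hwv
        rw [hpa] at hobs ⊢
        simp only [viewR, hdom, Set.mem_singleton_iff, ih, hobs, hPwv, hwv', if_false]
    | auth =>
      have hpa : permA act P a = a := permA_auth hdom hda
      have hne : EEDom.auth ≠ EEDom.voter v := fun h => by cases h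
      rw [hpa] at hobs ⊢
      simp only [viewR, hda, Set.mem_singleton_iff, if_neg hne, ih, hobs]

end Aux

/-- if `M` is FTA-compliant with `(EE, C_EE)` (the interpretation
being voter-homogeneous, as witnessed by `act`, and identity-oblivious, A1),
then for every voter `v`, every voter permutation `P` fixing `v` and every
sequence `α`, we have `α ≈_v P(α)`. -/
theorem statement12 {S A O V Vt AV : Type} (M : Machine S A (EEDom Vt) O)
    (act : AV → Vt → A)
    (hdom : ∀ (t : AV) (v : Vt), M.dom (act t v) = EEDom.voter v)
    (hsurj : ∀ (a : A) (v : Vt), M.dom a = EEDom.voter v → ∃ t : AV, act t v = a)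
    (hinj : ∀ (t t' : AV) (v v' : Vt), act t v = act t' v' → t = t' ∧ v = v')
    (I : Unit → List A → A → TFVal A V)
    (hA1 : ∀ (P : Equiv.Perm Vt) (α : List A) (a : A), M.dom a = EEDom.auth →
      I () α a = I () (permSeq act P α) a)
    (hFTA : FTACompliant M (EEArch Vt) I) :
    ∀ (v : Vt) (P : Equiv.Perm Vt), P v = v → ∀ α : List A,
      view M {EEDom.voter v} α = view M {EEDom.voter v} (permSeq act P α) := by
  intro v P hPv α
  unfold view
  rw [show (permSeq act P α).reverse = (α.reverse).map (permA act P) from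
    List.map_reverse.symm]
  exact (viewR_perm hdom hsurj hinj I hA1 hFTA v hPv α.reverse).symm
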